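/- Let φ : ℝ → ℝ be convex and differentiable at 0 with φ'(0) < 0, and let u, v be real numbers with u > v ≥ 0. Then every global minimizer t ∈ ℝ of the function f(t) = u·φ(t) + v·φ(−t) satisfies t > 0. (Classification-calibration lemma underlying Theorem 3.) -/

import Mathlib

/-- Classification-calibration lemma: for a convex surrogate `φ` with
`φ'(0) < 0` and weights `u > v ≥ 0`, every global minimizer of
`t ↦ u·φ(t) + v·φ(-t)` is strictly positive. -/
theorem calibration_convex_surrogate
    (φ : ℝ → ℝ) (hconv : ConvexOn ℝ Set.univ φ)
    (hdiff : DifferentiableAt ℝ φ 0) (hderiv : deriv φ 0 < 0)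
    (u v : ℝ) (hv : 0 ≤ v) (huv : v < u)
    (t : ℝ) (hmin : ∀ s : ℝ, u * φ t + v * φ (-t) ≤ u * φ s + v * φ (-s)) :
    0 < t := by
  set f : ℝ → ℝ := fun s => u * φ s + v * φ (-s) with hf
  -- f has derivative (u - v) * φ'(0) < 0 at 0
  have hφ : HasDerivAt φ (deriv φ 0) 0 := hdiff.hasDerivAt
  have hneg : HasDerivAt (fun s : ℝ => φ (-s)) (deriv φ 0 * (-1)) 0 := by
    have hφ' : HasDerivAt φ (deriv φ 0) (-0 : ℝ) := by simpa using hφ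
    have := hφ'.comp (0 : ℝ) (hasDerivAt_neg (0 : ℝ))
    simpa [Function.comp_def] using this
  have hfD : HasDerivAt f ((u - v) * deriv φ 0) 0 := by
    have := ((hφ.const_mul u).add (hneg.const_mul v))
    rw [show (u - v) * deriv φ 0 = u * deriv φ 0 + v * (deriv φ 0 * -1) by ring]
    exact this
  have hd : (u - v) * deriv φ 0 < 0 :=
    mul_neg_of_pos_of_neg (by linarith) hderiv
  -- find s > 0 with f s < f 0
  have hslope := hasDerivAt_iff_tendsto_slope.mp hfD
  have hev : ∀ᶠ s in nhdsWithin (0:ℝ) {0}ᶜ, slope f 0 s < 0 :=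
    hslope.eventually_lt_const hd
  have hev' : ∀ᶠ s in nhdsWithin (0:ℝ) (Set.Ioi 0), slope f 0 s < 0 :=
    hev.filter_mono (nhdsWithin_mono _ (fun x hx => by
      simp only [Set.mem_compl_iff, Set.mem_singleton_iff]
      exact ne_of_gt hx))
  obtain ⟨s, hs_slope, hs_pos⟩ :=
    (hev'.and self_mem_nhdsWithin).exists
  have hfs : f s < f 0 := by
    have : (f s - f 0) / (s - 0) < 0 := by
      simpa [slope, div_eq_inv_mul] using hs_slope
    have h2 : f s - f 0 < 0 := by
      by_contra h
      push_neg at h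
      have := div_nonneg h (by linarith : (0:ℝ) ≤ s - 0)
      linarith
    linarith
  -- now the contradiction
  by_contra h
  push_neg at h
  rcases eq_or_lt_of_le h with heq | hlt
  · -- t = 0
    have := hmin s
    rw [← heq] at hfs
    exact absurd this (not_le.mpr hfs)
  · -- t < 0 : 0 is a convex combination of t and s
    set a : ℝ := s / (s - t) with ha
    set b : ℝ := -t / (s - t) with hb
    have hst : (0:ℝ) < s - t := by linarith
    have ha0 : 0 ≤ a := div_nonneg hs_pos.le hst.le
    have hb0 : 0 ≤ b := div_nonneg (by linarith) hst.le
    have hab : a + b = 1 := by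
      rw [ha, hb, ← add_div, div_eq_one_iff_eq hst.ne']
      ring
    have hcomb : a * t + b * s = 0 := by
      field_simp [ha, hb]
      ring
    have h1 : φ (a • t + b • s) ≤ a • φ t + b • φ s :=
      hconv.2 (Set.mem_univ t) (Set.mem_univ s) ha0 hb0 hab
    have h2 : φ (a • (-t) + b • (-s)) ≤ a • φ (-t) + b • φ (-s) :=
      hconv.2 (Set.mem_univ (-t)) (Set.mem_univ (-s)) ha0 hb0 hab
    simp only [smul_eq_mul] at h1 h2
    rw [hcomb] at h1
    have hcomb' : a * -t + b * -s = 0 := by linarith [hcomb]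
    rw [hcomb'] at h2
    have hmins := hmin s
    -- f 0 ≤ a * f t + b * f s ≤ f s < f 0
    have key : f 0 ≤ a * f t + b * f s := by
      simp only [hf, neg_zero]
      nlinarith [mul_le_mul_of_nonneg_left h1 (le_of_lt (lt_of_le_of_lt hv huv)),
        mul_le_mul_of_nonneg_left h2 hv]
    have key2 : a * f t + b * f s ≤ f s := by
      have hft : f t ≤ f s := hmin s
      have h3 : a * f t ≤ a * f s := mul_le_mul_of_nonneg_left hft ha0
      have h4 : a * f s + b * f s = f s := by rw [← add_mul, hab, one_mul]
      linarith
    linarith
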